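/- arXiv:2503.01652 — 3 statements merged into one kernel-verified Lean document; each statement's English description precedes it below -/
import Mathlib

section
/- Fix n ≥ 1 and pairwise distinct real numbers a_1, b_1, …, a_n, b_n, and set g(X) = ∏_{i=1}^n (X − a_i)(X − b_i). Let W be an n-dimensional ℝ-vector subspace of the space of real polynomials of degree at most 2n − 2 such that every f ∈ W satisfies g′(b_i)·f(a_i) + g′(a_i)·f(b_i) = 0 for all i = 1, …, n. Then there exists a unique f ∈ W with f(a_i) = g′(a_i) for all i = 1, …, n, and this f moreover satisfies f(b_i) = −g′(b_i) for all i. -/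
open Polynomial Finset

theorem stmt2 (n : ℕ) (hn : 1 ≤ n) (a b : Fin n → ℝ)
    (hdist : Function.Injective (Sum.elim a b))
    (W : Submodule ℝ (Polynomial ℝ))
    (hWdim : Module.finrank ℝ ↥W = n)
    (hWdeg : W ≤ Polynomial.degreeLE ℝ ((2 * n - 2 : ℕ) : WithBot ℕ))
    (g : Polynomial ℝ) (hg : g = ∏ i : Fin n, (X - C (a i)) * (X - C (b i)))
    (hres : ∀ f ∈ W, ∀ i : Fin n,
      (derivative g).eval (b i) * f.eval (a i) + (derivative g).eval (a i) * f.eval (b i) = 0) :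
    (∃! f : Polynomial ℝ, f ∈ W ∧ ∀ i : Fin n, f.eval (a i) = (derivative g).eval (a i)) ∧
    (∀ f ∈ W, (∀ i : Fin n, f.eval (a i) = (derivative g).eval (a i)) →
      ∀ i : Fin n, f.eval (b i) = -(derivative g).eval (b i)) := by
  classical
  set r : Fin n ⊕ Fin n → ℝ := Sum.elim a b with hr
  -- rewrite g as a nodal polynomial
  have hgn : g = Lagrange.nodal Finset.univ r := by
    rw [hg, Lagrange.nodal, Fintype.prod_sum_type, ← prod_mul_distrib]
    simp [hr]
  -- the derivative of g is nonzero at each root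
  have hd : ∀ s : Fin n ⊕ Fin n, (derivative g).eval (r s) ≠ 0 := by
    intro s
    rw [hgn, Lagrange.eval_nodal_derivative_eval_node_eq (mem_univ s), Lagrange.eval_nodal]
    refine prod_ne_zero_iff.2 fun j hj => ?_
    have : s ≠ j := (mem_erase.mp hj).1.symm
    exact sub_ne_zero.2 fun h => this (hdist h)
  -- key: any f ∈ W vanishing at all a i is zero
  have hkey : ∀ f ∈ W, (∀ i : Fin n, f.eval (a i) = 0) → f = 0 := by
    intro f hf hfa
    have hfb : ∀ i : Fin n, f.eval (b i) = 0 := by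
      intro i
      have := hres f hf i
      rw [hfa i, mul_zero, zero_add] at this
      exact (mul_eq_zero.mp this).resolve_left (hd (Sum.inl i))
    have heval : ∀ s : Fin n ⊕ Fin n, f.eval (r s) = 0 := by
      rintro (i | i)
      · exact hfa i
      · exact hfb i
    refine Polynomial.eq_zero_of_natDegree_lt_card_of_eval_eq_zero f hdist heval ?_
    have hdeg : f.degree ≤ ((2 * n - 2 : ℕ) : WithBot ℕ) :=
      (Polynomial.mem_degreeLE).1 (hWdeg hf)
    have h1 : f.natDegree ≤ 2 * n - 2 := Polynomial.natDegree_le_iff_degree_le.2 hdeg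
    have h2 : Fintype.card (Fin n ⊕ Fin n) = 2 * n := by
      simp [Fintype.card_sum]; ring
    omega
  have : FiniteDimensional ℝ W := FiniteDimensional.of_finrank_pos (by omega)
  -- the evaluation map
  let E : W →ₗ[ℝ] (Fin n → ℝ) :=
    { toFun := fun f i => Polynomial.eval (a i) (f : Polynomial ℝ)
      map_add' := fun f g => by ext i; simp
      map_smul' := fun c f => by ext i; simp }
  have hEinj : Function.Injective E := by
    rw [← LinearMap.ker_eq_bot, LinearMap.ker_eq_bot']
    intro f hf0
    have : (f : Polynomial ℝ) = 0 := by
      refine hkey f f.2 fun i => ?_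
      exact congrFun hf0 i
    exact Subtype.ext this
  have hEsurj : Function.Surjective E :=
    (LinearMap.injective_iff_surjective_of_finrank_eq_finrank
      (by rw [hWdim, Module.finrank_pi]; simp)).1 hEinj
  -- second part first
  have hsecond : ∀ f ∈ W, (∀ i : Fin n, f.eval (a i) = (derivative g).eval (a i)) →
      ∀ i : Fin n, f.eval (b i) = -(derivative g).eval (b i) := by
    intro f hf hfa i
    have h := hres f hf i
    rw [hfa i] at h
    have hne : (derivative g).eval (a i) ≠ 0 := hd (Sum.inl i)
    have : (derivative g).eval (a i) * f.eval (b i) =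
        (derivative g).eval (a i) * (-(derivative g).eval (b i)) := by ring_nf; linarith
    exact mul_left_cancel₀ hne this
  refine ⟨?_, hsecond⟩
  obtain ⟨f, hf⟩ := hEsurj (fun i => (derivative g).eval (a i))
  refine ⟨f, ⟨f.2, fun i => congrFun hf i⟩, ?_⟩
  rintro f' ⟨hf'W, hf'a⟩
  have : E ⟨f', hf'W⟩ = E f := by
    ext i
    have := congrFun hf i
    simp only [E, LinearMap.coe_mk, AddHom.coe_mk] at this ⊢
    rw [hf'a i, this]
  have := hEinj this
  exact congrArg Subtype.val this
end

section
/- Fix n ≥ 1 and pairwise distinct real numbers a_1, b_1, …, a_n, b_n, set g(X) = ∏_{i=1}^n (X − a_i)(X − b_i) and g_i(X) = ∏_{j≠i} (X − a_j)(X − b_j) for i = 1, …, n. A polynomial f ∈ ℝ[X] of degree at most 2n − 2 lies in the linear span of g_1, …, g_n if and only if g′(b_i)·f(a_i) + g′(a_i)·f(b_i) = 0 for all i = 1, …, n. -/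
open Polynomial Finset

lemma polyDerivFinsetProd {ι : Type*} [DecidableEq ι] (s : Finset ι) (f : ι → Polynomial ℝ) :
    derivative (∏ i ∈ s, f i) = ∑ i ∈ s, (∏ j ∈ s.erase i, f j) * derivative (f i) := by
  rw [Finset.prod_eq_multiset_prod, Polynomial.derivative_prod, Finset.sum_eq_multiset_sum]
  refine congr_arg Multiset.sum (Multiset.map_congr rfl fun i hi => ?_)
  rw [← Finset.erase_val, ← Finset.prod_eq_multiset_prod]

theorem stmt3 (n : ℕ) (hn : 1 ≤ n) (a b : Fin n → ℝ)
    (hdist : Function.Injective (Sum.elim a b))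
    (g : Polynomial ℝ) (hg : g = ∏ i : Fin n, (X - C (a i)) * (X - C (b i)))
    (gi : Fin n → Polynomial ℝ)
    (hgi : ∀ i : Fin n, gi i = ∏ j ∈ Finset.univ.erase i, (X - C (a j)) * (X - C (b j)))
    (f : Polynomial ℝ) (hf : f.degree ≤ ((2 * n - 2 : ℕ) : WithBot ℕ)) :
    f ∈ Submodule.span ℝ (Set.range gi) ↔
      ∀ i : Fin n,
        (derivative g).eval (b i) * f.eval (a i) + (derivative g).eval (a i) * f.eval (b i) = 0 := by
  classical
  -- distinctness facts
  have hab : ∀ i j : Fin n, a i ≠ b j := by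
    intro i j h
    have := hdist (a₁ := Sum.inl i) (a₂ := Sum.inr j) (by simpa using h)
    simp at this
  have haa : ∀ i j : Fin n, i ≠ j → a i ≠ a j := by
    intro i j hij h
    exact hij (Sum.inl_injective (hdist (a₁ := Sum.inl i) (a₂ := Sum.inl j) (by simpa using h)))
  have hbb : ∀ i j : Fin n, i ≠ j → b i ≠ b j := by
    intro i j hij h
    exact hij (Sum.inr_injective (hdist (a₁ := Sum.inr i) (a₂ := Sum.inr j) (by simpa using h)))
  -- gi evaluations
  have hgia : ∀ i j : Fin n, j ≠ i → (gi i).eval (a j) = 0 := by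
    intro i j hji
    rw [hgi, eval_prod]
    refine Finset.prod_eq_zero (Finset.mem_erase.2 ⟨hji, Finset.mem_univ j⟩) ?_
    simp
  have hgib : ∀ i j : Fin n, j ≠ i → (gi i).eval (b j) = 0 := by
    intro i j hji
    rw [hgi, eval_prod]
    refine Finset.prod_eq_zero (Finset.mem_erase.2 ⟨hji, Finset.mem_univ j⟩) ?_
    simp
  have hgiane : ∀ i : Fin n, (gi i).eval (a i) ≠ 0 := by
    intro i
    rw [hgi, eval_prod]
    refine Finset.prod_ne_zero_iff.2 ?_
    intro j hj
    have hji : j ≠ i := (Finset.mem_erase.1 hj).1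
    simp only [eval_mul, eval_sub, eval_X, eval_C]
    exact mul_ne_zero (sub_ne_zero.2 (haa i j hji.symm)) (sub_ne_zero.2 (hab i j))
  have hgibne : ∀ i : Fin n, (gi i).eval (b i) ≠ 0 := by
    intro i
    rw [hgi, eval_prod]
    refine Finset.prod_ne_zero_iff.2 ?_
    intro j hj
    have hji : j ≠ i := (Finset.mem_erase.1 hj).1
    simp only [eval_mul, eval_sub, eval_X, eval_C]
    exact mul_ne_zero (fun h => hab j i (sub_eq_zero.1 h).symm)
      (sub_ne_zero.2 (hbb i j hji.symm))
  -- derivative evaluations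
  have hda : ∀ i : Fin n, (derivative g).eval (a i) = (a i - b i) * (gi i).eval (a i) := by
    intro i
    rw [hg, polyDerivFinsetProd, eval_finset_sum]
    rw [Finset.sum_eq_single i]
    · rw [eval_mul, ← hgi]
      simp only [derivative_mul, derivative_sub, derivative_X, derivative_C, sub_zero, one_mul,
        mul_one, eval_add, eval_mul, eval_sub, eval_X, eval_C]
      ring
    · intro j _ hji
      rw [eval_mul, eval_prod]
      rw [Finset.prod_eq_zero (Finset.mem_erase.2 ⟨fun h => hji h.symm, Finset.mem_univ i⟩)
        (by simp)]
      ring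
    · simp
  have hdb : ∀ i : Fin n, (derivative g).eval (b i) = (b i - a i) * (gi i).eval (b i) := by
    intro i
    rw [hg, polyDerivFinsetProd, eval_finset_sum]
    rw [Finset.sum_eq_single i]
    · rw [eval_mul, ← hgi]
      simp only [derivative_mul, derivative_sub, derivative_X, derivative_C, sub_zero, one_mul,
        mul_one, eval_add, eval_mul, eval_sub, eval_X, eval_C]
      ring
    · intro j _ hji
      rw [eval_mul, eval_prod]
      rw [Finset.prod_eq_zero (Finset.mem_erase.2 ⟨fun h => hji h.symm, Finset.mem_univ i⟩)
        (by simp)]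
      ring
    · simp
  constructor
  · -- forward
    intro hmem i
    obtain ⟨c, hc⟩ := (Submodule.mem_span_range_iff_exists_fun ℝ).1 hmem
    have hfa : f.eval (a i) = c i * (gi i).eval (a i) := by
      rw [← hc, eval_finset_sum]
      rw [Finset.sum_eq_single i]
      · simp
      · intro j _ hji
        simp [hgia j i (fun h => hji h.symm)]
      · simp
    have hfb : f.eval (b i) = c i * (gi i).eval (b i) := by
      rw [← hc, eval_finset_sum]
      rw [Finset.sum_eq_single i]
      · simp
      · intro j _ hji
        simp [hgib j i (fun h => hji h.symm)]
      · simp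
    rw [hda, hdb, hfa, hfb]
    ring
  · -- backward
    intro hres
    set c : Fin n → ℝ := fun i => f.eval (a i) / (gi i).eval (a i) with hc
    have key : ∀ i : Fin n, (gi i).eval (b i) * f.eval (a i) = (gi i).eval (a i) * f.eval (b i) := by
      intro i
      have h0 := hres i
      rw [hda, hdb] at h0
      have hba : b i - a i ≠ 0 := sub_ne_zero.2 fun h => hab i i h.symm
      have : (b i - a i) * ((gi i).eval (b i) * f.eval (a i) - (gi i).eval (a i) * f.eval (b i))
          = 0 := by linear_combination h0
      have := (mul_eq_zero.1 this).resolve_left hba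
      linarith
    have heva : ∀ j : Fin n, (f - ∑ i : Fin n, c i • gi i).eval (a j) = 0 := by
      intro j
      rw [eval_sub, eval_finset_sum]
      rw [Finset.sum_eq_single j]
      · simp only [eval_smul, smul_eq_mul, hc]
        rw [div_mul_cancel₀ _ (hgiane j)]
        ring
      · intro i _ hij
        simp [hgia i j (fun h => hij h.symm)]
      · simp
    have hevb : ∀ j : Fin n, (f - ∑ i : Fin n, c i • gi i).eval (b j) = 0 := by
      intro j
      rw [eval_sub, eval_finset_sum]
      rw [Finset.sum_eq_single j]
      · simp only [eval_smul, smul_eq_mul, hc]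
        field_simp [hgiane j]
        linear_combination -key j
      · intro i _ hij
        simp [hgib i j (fun h => hij h.symm)]
      · simp
    -- degree bound
    have hdeg : (f - ∑ i : Fin n, c i • gi i).natDegree < n + n := by
      have h1 : f.natDegree ≤ 2 * n - 2 := natDegree_le_iff_degree_le.2 hf
      have h2 : (∑ i : Fin n, c i • gi i).natDegree ≤ 2 * n - 2 := by
        refine (natDegree_sum_le _ _).trans ?_
        rw [Finset.fold_max_le]
        refine ⟨Nat.zero_le _, fun i _ => ?_⟩
        refine (natDegree_smul_le _ _).trans ?_
        rw [hgi]
        refine (natDegree_prod_le _ _).trans ?_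
        have : ∀ j ∈ Finset.univ.erase i,
            ((X - C (a j)) * (X - C (b j))).natDegree ≤ 2 := by
          intro j _
          refine (natDegree_mul_le).trans ?_
          have := natDegree_X_sub_C (a j)
          have := natDegree_X_sub_C (b j)
          omega
        refine (Finset.sum_le_sum this).trans ?_
        rw [Finset.sum_const, Finset.card_erase_of_mem (Finset.mem_univ i)]
        simp only [Finset.card_univ, Fintype.card_fin, smul_eq_mul]
        omega
      have := natDegree_sub_le f (∑ i : Fin n, c i • gi i)
      omega
    have hzero : f - ∑ i : Fin n, c i • gi i = 0 := by
      refine eq_zero_of_natDegree_lt_card_of_eval_eq_zero _ hdist ?_ ?_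
      · rintro (i | i)
        · exact heva i
        · exact hevb i
      · simpa using hdeg
    refine (Submodule.mem_span_range_iff_exists_fun ℝ).2 ⟨c, ?_⟩
    have := sub_eq_zero.1 hzero
    exact this.symm
end

section
/- In ℝ^6 with coordinates (x_{12}, x_{13}, x_{23}, x_{14}, x_{24}, x_{34}), the vector space of linear functionals b that vanish at the seven vectors e_{13}, e_{14}, e_{12} − e_{23}, 2e_{12} − e_{24}, 2e_{23} − e_{24}, 2e_{23} − e_{34}, and e_{24} − e_{34} is exactly one-dimensional, spanned by the functional b(x) = x_{12} + x_{23} + 2x_{24} + 2x_{34}. -/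
open Finset

/-- Standard basis vectors of `ℝ^6`, coordinates ordered as
`(x₁₂, x₁₃, x₂₃, x₁₄, x₂₄, x₃₄)`. -/
noncomputable def e (i : Fin 6) : Fin 6 → ℝ := Pi.single i 1

/-- The functional `x ↦ x₁₂ + x₂₃ + 2x₂₄ + 2x₃₄`. -/
noncomputable def adjPenta : (Fin 6 → ℝ) →ₗ[ℝ] ℝ :=
  (LinearMap.proj 0 : (Fin 6 → ℝ) →ₗ[ℝ] ℝ) + LinearMap.proj 2 +
    (2 : ℝ) • (LinearMap.proj 4 : (Fin 6 → ℝ) →ₗ[ℝ] ℝ) +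
    (2 : ℝ) • (LinearMap.proj 5 : (Fin 6 → ℝ) →ₗ[ℝ] ℝ)

lemma adjPenta_apply (x : Fin 6 → ℝ) :
    adjPenta x = x 0 + x 2 + 2 * x 4 + 2 * x 5 := by
  simp [adjPenta, smul_eq_mul]

lemma e_apply (i j : Fin 6) : e i j = if j = i then 1 else 0 := by
  simp [e, Pi.single_apply]

lemma b_expand (b : (Fin 6 → ℝ) →ₗ[ℝ] ℝ) (x : Fin 6 → ℝ) :
    b x = x 0 * b (e 0) + x 1 * b (e 1) + x 2 * b (e 2) + x 3 * b (e 3) +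
      x 4 * b (e 4) + x 5 * b (e 5) := by
  have hs : ∀ i : Fin 6, (fun j => if i = j then (1:ℝ) else 0) = e i := by
    intro i; funext j; simp [e, Pi.single_apply, eq_comm]
  rw [LinearMap.pi_apply_eq_sum_univ, Fin.sum_univ_six]
  simp only [hs, smul_eq_mul]

theorem stmt5 :
    adjPenta ≠ 0 ∧
    {b : (Fin 6 → ℝ) →ₗ[ℝ] ℝ |
        b (e 1) = 0 ∧ b (e 3) = 0 ∧ b (e 0 - e 2) = 0 ∧
        b ((2 : ℝ) • e 0 - e 4) = 0 ∧ b ((2 : ℝ) • e 2 - e 4) = 0 ∧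
        b ((2 : ℝ) • e 2 - e 5) = 0 ∧ b (e 4 - e 5) = 0} =
      {b | ∃ t : ℝ, b = t • adjPenta} := by
  constructor
  · intro h
    have h0 : adjPenta (e 0) = 1 := by simp [adjPenta_apply, e_apply]
    rw [h] at h0
    simp at h0
  · ext b
    simp only [Set.mem_setOf_eq, map_sub, map_smul, smul_eq_mul]
    constructor
    · rintro ⟨h1, h3, h02, h04, h24, h25, h45⟩
      refine ⟨b (e 0), ?_⟩
      apply LinearMap.ext
      intro x
      rw [LinearMap.smul_apply, smul_eq_mul, adjPenta_apply, b_expand b x]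
      linear_combination (x 1) * h1 + (x 3) * h3 - (x 2) * h02 - (x 4) * h04 -
        (x 5) * h25 - 2 * (x 5) * h02
    · rintro ⟨t, rfl⟩
      simp only [LinearMap.smul_apply, smul_eq_mul, adjPenta_apply]
      simp [e_apply]
      ring
end
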